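/- Let q be an odd prime power and L_u a finite field extension of the rational function field F̄_q(u) over the algebraic closure of F_q. Then there exists α ∈ F̄_q such that u − α is not a square in L_u. -/

import Mathlib

set_option maxHeartbeats 1000000
set_option synthInstance.maxHeartbeats 400000

open Polynomial IntermediateField

/-- If a polynomial has odd root multiplicity at some point, its image in the
field of rational functions is not a square. -/
lemma not_isSquare_of_odd_rootMultiplicity {F : Type*} [Field F]
    (f : F[X]) (a : F) (hodd : Odd (f.rootMultiplicity a)) :
    ¬ IsSquare (algebraMap F[X] (RatFunc F) f) := by
  rintro ⟨g, hg⟩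
  have hf : f ≠ 0 := by
    rintro rfl
    simp [rootMultiplicity_zero] at hodd
  have hd : g.denom ≠ 0 := g.denom_ne_zero
  have hnum : algebraMap F[X] (RatFunc F) g.num
      = g * algebraMap F[X] (RatFunc F) g.denom := by
    have h := RatFunc.num_div_denom g
    rw [div_eq_iff (RatFunc.algebraMap_ne_zero hd)] at h
    exact h
  have key : g.num * g.num = f * (g.denom * g.denom) := by
    apply RatFunc.algebraMap_injective F
    simp only [map_mul, hnum, hg]
    ring
  have hn : g.num ≠ 0 := by
    intro h0
    rw [h0, mul_zero] at key
    exact hf (by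
      have := key.symm
      rcases mul_eq_zero.mp this with h | h
      · exact h
      · exact absurd h (mul_ne_zero hd hd))
  have h1 : rootMultiplicity a (g.num * g.num)
      = rootMultiplicity a g.num + rootMultiplicity a g.num :=
    rootMultiplicity_mul (mul_ne_zero hn hn)
  have h2 : rootMultiplicity a (f * (g.denom * g.denom))
      = rootMultiplicity a f +
        (rootMultiplicity a g.denom + rootMultiplicity a g.denom) := by
    rw [rootMultiplicity_mul (mul_ne_zero hf (mul_ne_zero hd hd)),
      rootMultiplicity_mul (mul_ne_zero hd hd)]
  rw [key, h2] at h1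
  obtain ⟨m, hm⟩ := hodd
  omega

/-- If `y, z` generate quadratic extensions by square roots of `c, d`, with `c`, `d`
and `c*d` all nonsquares, then `z` is not in `K⟮y⟯`. -/
lemma not_mem_adjoin_sqrt {K E : Type*} [Field K] [Field E] [Algebra K E]
    (h2 : (2 : K) ≠ 0) {c d : K} (hc : ¬ IsSquare c) (hd : ¬ IsSquare d)
    (hcd : ¬ IsSquare (c * d)) {y z : E}
    (hy : y ^ 2 = algebraMap K E c) (hz2 : z ^ 2 = algebraMap K E d) :
    z ∉ IntermediateField.adjoin K {y} := by
  intro hz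
  set φ := algebraMap K E with hφ
  have hinj : Function.Injective φ := (algebraMap K E).injective
  -- `y` is integral with monic annihilating polynomial `X^2 - C c`
  have hq0 : Polynomial.aeval y ((X : K[X]) ^ 2 - C c) = 0 := by
    simp [hy, hφ]
  have hqm : ((X : K[X]) ^ 2 - C c).Monic := monic_X_pow_sub_C c two_ne_zero
  have hyi : IsIntegral K y := ⟨(X : K[X]) ^ 2 - C c, hqm, by
    simpa [Polynomial.aeval_def] using hq0⟩
  -- so z is a polynomial in y, of degree at most 1
  have hz' : z ∈ Algebra.adjoin K {y} := by
    have := IntermediateField.adjoin_simple_toSubalgebra_of_isAlgebraic hyi.isAlgebraic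
    rw [← this]
    exact hz
  rw [Algebra.adjoin_singleton_eq_range_aeval] at hz'
  obtain ⟨P, hP'⟩ := hz'
  have hP : Polynomial.aeval y P = z := hP'
  set R := P %ₘ ((X : K[X]) ^ 2 - C c) with hR
  have hPR : Polynomial.aeval y P = Polynomial.aeval y R := by
    conv_lhs => rw [← modByMonic_add_div P ((X : K[X]) ^ 2 - C c)]
    simp [hq0, hR]
  have hdeg : R.natDegree ≤ 1 := by
    by_cases h0 : R = 0
    · simp [h0]
    · have h := degree_modByMonic_lt P hqm
      rw [degree_X_pow_sub_C (by norm_num) c] at h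
      have h2' : R.natDegree < 2 := (natDegree_lt_iff_degree_lt h0).mpr
        (by exact_mod_cast h)
      omega
  have hRrep := eq_X_add_C_of_natDegree_le_one hdeg
  set b := R.coeff 1 with hb'
  set a := R.coeff 0 with ha'
  have hzrep : z = φ b * y + φ a := by
    rw [← hP, hPR]
    conv_lhs => rw [hRrep]
    simp [hφ]
  -- the key equation
  have key : φ (2 * a * b) * y = φ (d - a ^ 2 - b ^ 2 * c) := by
    have h := hz2
    rw [hzrep] at h
    simp only [map_mul, map_sub, map_pow, map_ofNat, hφ] at h ⊢
    linear_combination h - (algebraMap K E b) ^ 2 * hy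
  by_cases hb0 : b = 0
  · refine hd ⟨a, hinj ?_⟩
    have : z = φ a := by rw [hzrep, hb0, map_zero, zero_mul, zero_add]
    rw [map_mul]
    calc φ d = z ^ 2 := hz2.symm
    _ = φ a * φ a := by rw [this]; ring
  by_cases ha0 : a = 0
  · refine hcd ⟨b * c, hinj ?_⟩
    have hzb : z = φ b * y := by rw [hzrep, ha0, map_zero, add_zero]
    have : φ d = φ (b ^ 2 * c) := by
      rw [← hz2, hzb, map_mul, map_pow]
      rw [mul_pow, hy]
    have hdeq : d = b ^ 2 * c := hinj this
    rw [hdeq]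
    push_cast [map_mul, map_pow]
    ring
  · have h2ab : φ (2 * a * b) ≠ 0 := by
      rw [hφ, ne_eq, show ∀ x : K, algebraMap K E x = 0 ↔ x = 0 from
        fun x => ⟨fun hh => (algebraMap K E).injective (by simpa using hh),
          fun hh => by simp [hh]⟩]
      intro hh
      rcases mul_eq_zero.mp hh with hh | hh
      · rcases mul_eq_zero.mp hh with hh | hh
        · exact h2 hh
        · exact ha0 hh
      · exact hb0 hh
    have hyval : y = φ ((d - a ^ 2 - b ^ 2 * c) / (2 * a * b)) := by
      rw [map_div₀, eq_div_iff h2ab, mul_comm, key]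
    refine hc ⟨(d - a ^ 2 - b ^ 2 * c) / (2 * a * b), hinj ?_⟩
    rw [map_mul, ← hy, hyval]
    ring

/-- Let `q = p^k` be an odd prime power, `F̄_q` an algebraic closure of `F_q`, and
`L_u` a finite extension of the rational function field `F̄_q(u)`. Then there
exists `α ∈ F̄_q` such that `u − α` is not a square in `L_u`. -/
theorem exists_nonsquare_linear (p k : ℕ) [Fact p.Prime] (hp : Odd p) (hk : 0 < k)
    (Fbar : Type*) [Field Fbar] [Algebra (GaloisField p k) Fbar]
    [IsAlgClosure (GaloisField p k) Fbar]
    (L : Type*) [Field L] [Algebra (RatFunc Fbar) L] [FiniteDimensional (RatFunc Fbar) L] :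
    ∃ α : Fbar, ¬ IsSquare (algebraMap (RatFunc Fbar) L (RatFunc.X - RatFunc.C α)) := by
  by_contra hcon
  push_neg at hcon
  set K := RatFunc Fbar with hK
  haveI : IsAlgClosed Fbar := IsAlgClosure.isAlgClosed (GaloisField p k)
  haveI : Infinite Fbar := inferInstance
  -- characteristic facts
  haveI : CharP Fbar p := charP_of_injective_algebraMap
    (algebraMap (GaloisField p k) Fbar).injective p
  haveI : CharP K p := charP_of_injective_algebraMap
    (algebraMap Fbar K).injective p
  have hp2 : p ≠ 2 := by
    intro h
    rw [h] at hp
    simp [Nat.odd_iff] at hp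
  have h2 : (2 : K) ≠ 0 := by
    intro h
    have : ((2 : ℕ) : K) = 0 := by exact_mod_cast h
    have := (CharP.cast_eq_zero_iff K p 2).mp this
    exact hp2 ((Nat.prime_dvd_prime_iff_eq Fact.out Nat.prime_two).mp this)
  -- the linear polynomials and their key non-square properties in K
  have hfactor : ∀ α : Fbar, (RatFunc.X - RatFunc.C α : K)
      = algebraMap Fbar[X] K (X - C α) := by
    intro α
    rw [map_sub, RatFunc.algebraMap_X, RatFunc.algebraMap_C]
  have hns : ∀ α : Fbar, ¬ IsSquare (RatFunc.X - RatFunc.C α : K) := by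
    intro α hsq
    rw [hfactor] at hsq
    exact not_isSquare_of_odd_rootMultiplicity (X - C α) α
      (by rw [rootMultiplicity_X_sub_C_self]; exact odd_one) hsq
  have hns2 : ∀ α β : Fbar, α ≠ β →
      ¬ IsSquare ((RatFunc.X - RatFunc.C α) * (RatFunc.X - RatFunc.C β) : K) := by
    intro α β hne hsq
    rw [hfactor, hfactor, ← map_mul] at hsq
    refine not_isSquare_of_odd_rootMultiplicity _ β ?_ hsq
    rw [rootMultiplicity_mul (by
      apply mul_ne_zero <;> exact X_sub_C_ne_zero _),
      rootMultiplicity_X_sub_C_self,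
      rootMultiplicity_eq_zero (by simp [sub_eq_zero, hne.symm])]
    simp
  -- choose square roots in L
  have hchoice : ∀ α : Fbar, ∃ s : L,
      s ^ 2 = algebraMap K L (RatFunc.X - RatFunc.C α) := by
    intro α
    obtain ⟨s, hs⟩ := hcon α
    exact ⟨s, by rw [hs]; ring⟩
  choose s hs using hchoice
  -- each square root is separable over K
  have hsep : ∀ α : Fbar, IsSeparable K (s α) := by
    intro α
    have hc0 : (RatFunc.X - RatFunc.C α : K) ≠ 0 := by
      rw [hfactor]
      exact RatFunc.algebraMap_ne_zero (X_sub_C_ne_zero α)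
    have hqsep : ((X : K[X]) ^ 2 - C (RatFunc.X - RatFunc.C α)).Separable :=
      separable_X_pow_sub_C _ (by exact_mod_cast h2) hc0
    exact hqsep.of_dvd (minpoly.dvd K _ (by simp [hs α]))
  -- work inside the separable closure of K in L
  set E := separableClosure K L with hE
  haveI : Finite (IntermediateField K E) :=
    Field.finite_intermediateField_of_exists_primitive_element K E
      (Field.exists_primitive_element K E)
  have hmem : ∀ α : Fbar, s α ∈ E :=
    fun α => (mem_separableClosure_iff).mpr (hsep α)
  set y : Fbar → E := fun α => ⟨s α, hmem α⟩ with hy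
  have hysq : ∀ α : Fbar, (y α) ^ 2
      = algebraMap K E (RatFunc.X - RatFunc.C α) := by
    intro α
    apply Subtype.ext
    show ((y α ^ 2 : E) : L) = ((algebraMap K E (RatFunc.X - RatFunc.C α) : E) : L)
    rw [SubmonoidClass.coe_pow]
    show s α ^ 2 = _
    rw [hs α]
    rfl
  -- infinitely many α, finitely many intermediate fields
  obtain ⟨α, β, hne, heq⟩ := Finite.exists_ne_map_eq_of_infinite
    (fun α : Fbar => IntermediateField.adjoin K {y α})
  have hzmem : y β ∈ IntermediateField.adjoin K {y α} := by
    rw [heq]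
    exact IntermediateField.mem_adjoin_simple_self K (y β)
  exact not_mem_adjoin_sqrt h2 (hns α) (hns β) (hns2 α β hne)
    (hysq α) (hysq β) hzmem
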